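/- Let q : X → Y be a surjection of nonempty finite sets such that every fiber q⁻¹(y) has the same cardinality |X|/|Y|. For y ∈ Y set η_y = √(|Y|/|X|)·χ_{q⁻¹(y)} ∈ l²(X). Then (η_y)_{y∈Y} is an orthonormal family in l²(X), and for every ξ : X → ℂ the vector Qξ = ∑_{y∈Y} ⟨η_y, ξ⟩·η_y satisfies ‖Qξ‖² ≤ |supp ξ| · (|Y|/|X|) · ‖ξ‖². -/

import Mathlib

/-- If q : X → Y is a surjection of nonempty finite sets with all
fibers of cardinality |X|/|Y|, then the normalized fiber indicators η_y form an
orthonormal family in l²(X), and the projection Qξ = ∑_y ⟨η_y, ξ⟩·η_y satisfies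
‖Qξ‖² ≤ |supp ξ|·(|Y|/|X|)·‖ξ‖². -/
theorem stmt_13 {X Y : Type*} [Fintype X] [Fintype Y] [Nonempty X] [Nonempty Y]
    [DecidableEq Y] (q : X → Y) (hsurj : Function.Surjective q)
    (hfib : ∀ y : Y, (Finset.univ.filter fun x => q x = y).card * Fintype.card Y
      = Fintype.card X)
    (η : Y → X → ℂ)
    (hη : ∀ y x, η y x =
      if q x = y then (Real.sqrt ((Fintype.card Y : ℝ) / (Fintype.card X : ℝ)) : ℂ)
      else 0)
    (ξ Qξ : X → ℂ)
    (hQ : ∀ x, Qξ x = ∑ y : Y, (∑ x' : X, (starRingEnd ℂ) (η y x') * ξ x') * η y x) :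
    (∀ y y' : Y, ∑ x : X, (starRingEnd ℂ) (η y x) * η y' x
      = if y = y' then 1 else 0) ∧
    ∑ x : X, ‖Qξ x‖ ^ 2 ≤
      ((Function.support ξ).ncard : ℝ) * ((Fintype.card Y : ℝ) / (Fintype.card X : ℝ))
        * ∑ x : X, ‖ξ x‖ ^ 2 := by
  classical
  set α : ℝ := Real.sqrt ((Fintype.card Y : ℝ) / (Fintype.card X : ℝ)) with hαdef
  have hX : (0:ℝ) < Fintype.card X := by positivity
  have hα0 : 0 ≤ α := Real.sqrt_nonneg _
  have hα2 : α * α = (Fintype.card Y : ℝ) / (Fintype.card X : ℝ) := by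
    rw [hαdef, ← Real.sqrt_mul_self (by positivity : (0:ℝ) ≤ (Fintype.card Y : ℝ) / (Fintype.card X : ℝ))]
    · ring_nf
      rw [Real.sq_sqrt (by positivity)]
  -- fiber cards
  have hcard : ∀ y : Y, ((Finset.univ.filter fun x => q x = y).card : ℝ) * (α * α) = 1 := by
    intro y
    rw [hα2]
    have := hfib y
    field_simp
    exact_mod_cast this
  -- Part 1
  have part1 : ∀ y y' : Y, ∑ x : X, (starRingEnd ℂ) (η y x) * η y' x
      = if y = y' then 1 else 0 := by
    intro y y'
    by_cases h : y = y'
    · subst h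
      simp only [if_pos rfl]
      have : ∀ x : X, (starRingEnd ℂ) (η y x) * η y x
          = if q x = y then ((α : ℂ) * (α : ℂ)) else 0 := by
        intro x
        rw [hη]
        split_ifs <;> simp
      rw [Finset.sum_congr rfl fun x _ => this x, ← Finset.sum_filter]
      simp only [Finset.sum_const, nsmul_eq_mul]
      have h1 := hcard y
      rw [← Complex.ofReal_mul, ← Complex.ofReal_natCast, ← Complex.ofReal_mul, h1,
        Complex.ofReal_one]
      simp
    · simp only [if_neg h]
      apply Finset.sum_eq_zero
      intro x _
      rw [hη, hη]
      split_ifs with h1 h2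
      · exact absurd (h1 ▸ h2) h
      · simp
      · simp
      · simp
  refine ⟨part1, ?_⟩
  -- Part 2
  set S : Y → ℂ := fun y => ∑ x ∈ Finset.univ.filter fun x => q x = y, ξ x with hS
  have hc : ∀ y : Y, (∑ x' : X, (starRingEnd ℂ) (η y x') * ξ x') = (α:ℂ) * S y := by
    intro y
    rw [hS]
    have : ∀ x : X, (starRingEnd ℂ) (η y x) * ξ x
        = if q x = y then (α:ℂ) * ξ x else 0 := by
      intro x
      rw [hη]
      split_ifs <;> simp
    rw [Finset.sum_congr rfl fun x _ => this x, ← Finset.sum_filter, Finset.mul_sum]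
  have hQx : ∀ x : X, Qξ x = (α:ℂ) * (α:ℂ) * S (q x) := by
    intro x
    rw [hQ]
    have : ∀ y : Y, (∑ x' : X, (starRingEnd ℂ) (η y x') * ξ x') * η y x
        = if q x = y then (α:ℂ) * S y * (α:ℂ) else 0 := by
      intro y
      rw [hc, hη]
      split_ifs <;> simp
    rw [Finset.sum_congr rfl fun y _ => this y]
    rw [Finset.sum_ite_eq Finset.univ (q x) (fun y => (α:ℂ) * S y * (α:ℂ))]
    simp [mul_comm, mul_assoc, mul_left_comm]
  -- norm squared of Q
  have hQnorm : ∑ x : X, ‖Qξ x‖ ^ 2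
      = ∑ y : Y, (α * α) * ‖S y‖ ^ 2 := by
    have step : ∀ x : X, ‖Qξ x‖ ^ 2 = (α*α)*(α*α) * ‖S (q x)‖ ^ 2 := by
      intro x
      rw [hQx]
      simp [norm_mul, Complex.norm_real, Real.norm_eq_abs, abs_of_nonneg hα0]
      ring
    rw [Finset.sum_congr rfl fun x _ => step x,
      ← Finset.sum_fiberwise (g := q) (f := fun x => (α*α)*(α*α) * ‖S (q x)‖ ^ 2)]
    apply Finset.sum_congr rfl
    intro y _
    rw [Finset.sum_congr rfl (fun x hx => by
      rw [(Finset.mem_filter.mp hx).2]),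
      Finset.sum_const, nsmul_eq_mul]
    have := hcard y
    calc ((Finset.univ.filter fun x => q x = y).card : ℝ) * ((α*α)*(α*α) * ‖S y‖ ^ 2)
        = (((Finset.univ.filter fun x => q x = y).card : ℝ) * (α*α)) * ((α*α) * ‖S y‖ ^ 2) := by ring
      _ = (α * α) * ‖S y‖ ^ 2 := by rw [this, one_mul]
  rw [hQnorm]
  set N : ℝ := ((Function.support ξ).ncard : ℝ) with hN
  have hNcard : (Function.support ξ).ncard = (Finset.univ.filter fun x => ξ x ≠ 0).card := by
    rw [Set.ncard_eq_toFinset_card']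
    congr 1
    ext x
    simp only [Set.mem_toFinset, Finset.mem_filter, Finset.mem_univ, true_and, Function.mem_support]
  -- Cauchy–Schwarz per fiber
  have hCS : ∀ y : Y, ‖S y‖ ^ 2
      ≤ N * ∑ x ∈ Finset.univ.filter fun x => q x = y, ‖ξ x‖ ^ 2 := by
    intro y
    set F := Finset.univ.filter fun x => q x = y with hF
    set T := F.filter fun x => ξ x ≠ 0 with hT
    have hST : S y = ∑ x ∈ T, ξ x := by
      rw [hS, hT]
      exact (Finset.sum_filter_ne_zero F).symm
    have h1 : ‖S y‖ ≤ ∑ x ∈ T, ‖ξ x‖ := by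
      rw [hST]
      exact norm_sum_le _ _
    have h2 : (∑ x ∈ T, ‖ξ x‖) ^ 2 ≤ T.card * ∑ x ∈ T, ‖ξ x‖ ^ 2 :=
      sq_sum_le_card_mul_sum_sq
    have hTN : (T.card : ℝ) ≤ N := by
      rw [hN, hNcard]
      exact_mod_cast Finset.card_le_card (by
        intro x hx
        simp only [hT, Finset.mem_filter] at hx
        simp [hx.2])
    have h3 : ∑ x ∈ T, ‖ξ x‖ ^ 2 ≤ ∑ x ∈ F, ‖ξ x‖ ^ 2 :=
      Finset.sum_le_sum_of_subset_of_nonneg (Finset.filter_subset _ _)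
        (fun x _ _ => by positivity)
    calc ‖S y‖ ^ 2 ≤ (∑ x ∈ T, ‖ξ x‖) ^ 2 := by
          apply sq_le_sq' _ h1
          have : 0 ≤ ∑ x ∈ T, ‖ξ x‖ := Finset.sum_nonneg fun x _ => norm_nonneg _
          linarith [norm_nonneg (S y)]
      _ ≤ T.card * ∑ x ∈ T, ‖ξ x‖ ^ 2 := h2
      _ ≤ N * ∑ x ∈ F, ‖ξ x‖ ^ 2 := by
          apply mul_le_mul hTN h3 (Finset.sum_nonneg fun x _ => by positivity)
            (le_trans (by positivity) hTN)
  calc ∑ y : Y, (α * α) * ‖S y‖ ^ 2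
      ≤ ∑ y : Y, (α * α) * (N * ∑ x ∈ Finset.univ.filter fun x => q x = y, ‖ξ x‖ ^ 2) := by
        apply Finset.sum_le_sum
        intro y _
        exact mul_le_mul_of_nonneg_left (hCS y) (by positivity)
    _ = N * (α * α) * ∑ y : Y, ∑ x ∈ Finset.univ.filter fun x => q x = y, ‖ξ x‖ ^ 2 := by
        rw [Finset.mul_sum]
        exact Finset.sum_congr rfl fun y _ => by ring
    _ = N * ((Fintype.card Y : ℝ) / (Fintype.card X : ℝ)) * ∑ x : X, ‖ξ x‖ ^ 2 := by
        rw [hα2, Finset.sum_fiberwise]
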